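/- For every integer n ≥ 3, if f is a maximal irredundant broadcast on the path P_n, then H_f(x_2) ≠ ∅ and H_f(x_{n−1}) ≠ ∅, i.e. the second and the second-to-last vertices of P_n are f-dominated. -/
import Mathlib


open SimpleGraph

namespace Broadcast

variable {V : Type*} [Fintype V]

/-- The eccentricity of a vertex: the maximum distance from `v` to any vertex. -/
noncomputable def ecc (G : SimpleGraph V) (v : V) : ℕ :=
  Finset.univ.sup fun u => G.dist v u

/-- A broadcast on `G`: `f v ≤ e_G(v)` for every vertex `v`. -/
def IsBroadcast (G : SimpleGraph V) (f : V → ℕ) : Prop :=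
  ∀ v, f v ≤ ecc G v

/-- The cost of a broadcast. -/
def cost (f : V → ℕ) : ℕ := ∑ v, f v

/-- `hears G f u` is H_f(u): the set of f-broadcast vertices `v` with `d(u,v) ≤ f v`. -/
def hears (G : SimpleGraph V) (f : V → ℕ) (u : V) : Set V :=
  {v | 1 ≤ f v ∧ G.dist u v ≤ f v}

/-- A dominating broadcast: every vertex hears some broadcast vertex. -/
def IsDominating (G : SimpleGraph V) (f : V → ℕ) : Prop :=
  IsBroadcast G f ∧ ∀ u, (hears G f u).Nonempty

/-- A minimal dominating broadcast. -/
def IsMinimalDominating (G : SimpleGraph V) (f : V → ℕ) : Prop :=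
  IsDominating G f ∧ ∀ g, IsDominating G g → (∀ v, g v ≤ f v) → g = f

/-- The broadcast domination number γ_b: minimum cost of a dominating broadcast. -/
noncomputable def broadcastDomination (G : SimpleGraph V) : ℕ :=
  sInf {c | ∃ f, IsDominating G f ∧ cost f = c}

/-- The upper broadcast domination number Γ_b: maximum cost of a minimal dominating broadcast. -/
noncomputable def upperBroadcastDomination (G : SimpleGraph V) : ℕ :=
  sSup {c | ∃ f, IsMinimalDominating G f ∧ cost f = c}

/-- The private f-neighborhood PN_f(v): vertices hearing only `v`. -/
def privateNbhd (G : SimpleGraph V) (f : V → ℕ) (v : V) : Set V :=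
  {u | hears G f u = {v}}

open Classical in
/-- The private f-border PB_f(v). -/
noncomputable def privateBorder (G : SimpleGraph V) (f : V → ℕ) (v : V) : Set V :=
  if f v = 1 ∧ privateNbhd G f v = {v} then {v}
  else {u | u ∈ privateNbhd G f v ∧ G.dist u v = f v}

/-- An irredundant broadcast: every broadcast vertex has a nonempty private border. -/
def IsIrredundant (G : SimpleGraph V) (f : V → ℕ) : Prop :=
  IsBroadcast G f ∧ ∀ v, 1 ≤ f v → (privateBorder G f v).Nonempty

/-- A maximal irredundant broadcast. -/
def IsMaximalIrredundant (G : SimpleGraph V) (f : V → ℕ) : Prop :=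
  IsIrredundant G f ∧ ∀ g, IsIrredundant G g → (∀ v, f v ≤ g v) → g = f

/-- The upper broadcast irredundance number IR_b: maximum cost of an irredundant broadcast. -/
noncomputable def upperBroadcastIrredundance (G : SimpleGraph V) : ℕ :=
  sSup {c | ∃ f, IsIrredundant G f ∧ cost f = c}

/-- The broadcast irredundance number ir_b: minimum cost of a maximal irredundant broadcast. -/
noncomputable def broadcastIrredundance (G : SimpleGraph V) : ℕ :=
  sInf {c | ∃ f, IsMaximalIrredundant G f ∧ cost f = c}

/-- An independent broadcast: every broadcast vertex hears only itself, i.e. |H_f(v)| = 1. -/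
def IsIndependent (G : SimpleGraph V) (f : V → ℕ) : Prop :=
  IsBroadcast G f ∧ ∀ v, 1 ≤ f v → hears G f v = {v}

/-- A maximal independent broadcast. -/
def IsMaximalIndependent (G : SimpleGraph V) (f : V → ℕ) : Prop :=
  IsIndependent G f ∧ ∀ g, IsIndependent G g → (∀ v, f v ≤ g v) → g = f

/-- The broadcast independence number β_b: maximum cost of an independent broadcast. -/
noncomputable def broadcastIndependence (G : SimpleGraph V) : ℕ :=
  sSup {c | ∃ f, IsIndependent G f ∧ cost f = c}

/-- The lower broadcast independence number i_b: minimum cost of a maximal independent broadcast. -/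
noncomputable def lowerBroadcastIndependence (G : SimpleGraph V) : ℕ :=
  sInf {c | ∃ f, IsMaximalIndependent G f ∧ cost f = c}

/-- A packing broadcast: every vertex hears at most one broadcast vertex. -/
def IsPacking (G : SimpleGraph V) (f : V → ℕ) : Prop :=
  IsBroadcast G f ∧ ∀ u, (hears G f u).Subsingleton

/-- A maximal packing broadcast. -/
def IsMaximalPacking (G : SimpleGraph V) (f : V → ℕ) : Prop :=
  IsPacking G f ∧ ∀ g, IsPacking G g → (∀ v, f v ≤ g v) → g = f

/-- The broadcast packing number P_b: maximum cost of a packing broadcast. -/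
noncomputable def broadcastPacking (G : SimpleGraph V) : ℕ :=
  sSup {c | ∃ f, IsPacking G f ∧ cost f = c}

/-- The lower broadcast packing number p_b: minimum cost of a maximal packing broadcast. -/
noncomputable def lowerBroadcastPacking (G : SimpleGraph V) : ℕ :=
  sInf {c | ∃ f, IsMaximalPacking G f ∧ cost f = c}

end Broadcast


lemma pathGraph_walk_le {n : ℕ} {i j : Fin n} (p : (SimpleGraph.pathGraph n).Walk i j) :
    max i.val j.val - min i.val j.val ≤ p.length := by
  induction p with
  | nil => simp
  | cons h p ih =>
    rw [pathGraph_adj] at h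
    rw [Walk.length_cons]
    omega

lemma pathGraph_connected' {n : ℕ} (hn : 0 < n) : (SimpleGraph.pathGraph n).Connected := by
  obtain ⟨m, rfl⟩ := Nat.exists_eq_succ_of_ne_zero hn.ne'
  exact pathGraph_connected m

lemma pathGraph_dist_le_aux {n : ℕ} (d : ℕ) : ∀ i j : Fin n, j.val = i.val + d →
    (SimpleGraph.pathGraph n).dist i j ≤ d := by
  induction d with
  | zero => intro i j h; have : i = j := Fin.ext (by omega); simp [this]
  | succ d ih =>
    intro i j h
    have hi1 : i.val + 1 < n := by have := j.isLt; omega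
    set i' : Fin n := ⟨i.val + 1, hi1⟩ with hi'
    have hadj : (SimpleGraph.pathGraph n).Adj i i' := by rw [pathGraph_adj]; left; rfl
    have hconn := pathGraph_connected' (n := n) (by omega)
    calc (SimpleGraph.pathGraph n).dist i j
        ≤ (SimpleGraph.pathGraph n).dist i i' + (SimpleGraph.pathGraph n).dist i' j :=
          hconn.dist_triangle
      _ ≤ 1 + d := by
          have h1 : (SimpleGraph.pathGraph n).dist i i' = 1 := dist_eq_one_iff_adj.mpr hadj
          have h2 := ih i' j (by simp [hi']; omega)
          omega
      _ = d + 1 := by omega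

lemma pathGraph_dist {n : ℕ} (i j : Fin n) :
    (SimpleGraph.pathGraph n).dist i j = max i.val j.val - min i.val j.val := by
  apply le_antisymm
  · rcases le_total i.val j.val with h | h
    · have := pathGraph_dist_le_aux (j.val - i.val) i j (by omega)
      omega
    · have := pathGraph_dist_le_aux (i.val - j.val) j i (by omega)
      rw [SimpleGraph.dist_comm] at this
      omega
  · have hconn := pathGraph_connected' (n := n) i.pos
    obtain ⟨p, hp⟩ := hconn.exists_walk_length_eq_dist i j
    calc max i.val j.val - min i.val j.val ≤ p.length := pathGraph_walk_le p
      _ = _ := hp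

section Aux
open Broadcast

variable {V : Type*} [Fintype V]

lemma hears_second_vertex (G : SimpleGraph V) (f : V → ℕ) (u0 u1 : V)
    (hadj : G.Adj u0 u1)
    (hecc : 1 ≤ ecc G u0)
    (hd : ∀ v, v ≠ u0 → G.dist u1 v ≤ G.dist u0 v)
    (hball : ∀ u, G.dist u u0 ≤ 1 → u = u0 ∨ u = u1)
    (hf : IsMaximalIrredundant G f) :
    hears G f u1 ≠ ∅ := by
  classical
  intro h
  have hne : u0 ≠ u1 := hadj.ne
  have hdist10 : G.dist u1 u0 = 1 := SimpleGraph.dist_eq_one_iff_adj.mpr hadj.symm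
  have h1 : ∀ v, ¬(1 ≤ f v ∧ G.dist u1 v ≤ f v) := by
    intro v hv
    have : v ∈ hears G f u1 := hv
    rw [h] at this
    exact this
  have hf0 : f u0 = 0 := by
    by_contra hf0
    exact h1 u0 ⟨by omega, by omega⟩
  have h0 : ∀ v, ¬(1 ≤ f v ∧ G.dist u0 v ≤ f v) := by
    rintro v ⟨hv1, hv2⟩
    by_cases hv : v = u0
    · subst hv; omega
    · exact h1 v ⟨hv1, le_trans (hd v hv) hv2⟩
  -- key fact: anyone who hears someone under f is far from u0
  have hA : ∀ u v, v ∈ hears G f u → 1 < G.dist u u0 := by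
    intro u v hv
    by_contra hle
    rcases hball u (by omega) with rfl | rfl
    · exact h0 v hv
    · exact h1 v hv
  set g : V → ℕ := Function.update f u0 1 with hg
  have hgu0 : g u0 = 1 := by rw [hg]; simp
  have hgv : ∀ v, v ≠ u0 → g v = f v := fun v hv => Function.update_of_ne hv _ _
  have hle : ∀ v, f v ≤ g v := by
    intro v
    by_cases hv : v = u0
    · subst hv; omega
    · rw [hgv v hv]
  have hg_hears : ∀ u w, w ∈ hears G g u ↔ (w ∈ hears G f u ∨ (w = u0 ∧ G.dist u u0 ≤ 1)) := by
    intro u w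
    by_cases hw : w = u0
    · subst hw
      constructor
      · rintro ⟨_, h2⟩
        rw [hgu0] at h2
        exact Or.inr ⟨rfl, h2⟩
      · rintro (hmem | ⟨_, hd2⟩)
        · exact absurd hmem.1 (by omega)
        · exact ⟨by omega, by omega⟩
    · rw [show (w ∈ hears G g u ↔ 1 ≤ g w ∧ G.dist u w ≤ g w) from Iff.rfl,
        show (w ∈ hears G f u ↔ 1 ≤ f w ∧ G.dist u w ≤ f w) from Iff.rfl, hgv w hw]
      simp [hw]
  -- hears under g equals hears under f for anyone far from u0
  have hg_far : ∀ u, 1 < G.dist u u0 → hears G g u = hears G f u := by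
    intro u hu
    ext w
    rw [hg_hears]
    constructor
    · rintro (h | ⟨_, h2⟩)
      · exact h
      · omega
    · exact Or.inl
  have hPN : ∀ v, v ≠ u0 → privateNbhd G g v = privateNbhd G f v := by
    intro v hv
    ext u
    constructor
    · intro hu
      have hvmem : v ∈ hears G g u := by rw [hu]; rfl
      rcases (hg_hears u v).mp hvmem with hvf | ⟨hvu0, _⟩
      · have : 1 < G.dist u u0 := hA u v hvf
        have := hg_far u this
        show hears G f u = {v}
        rw [← this, hu]
      · exact absurd hvu0 hv
    · intro hu
      have hvf : v ∈ hears G f u := by rw [hu]; rfl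
      have : 1 < G.dist u u0 := hA u v hvf
      show hears G g u = {v}
      rw [hg_far u this, hu]
  have hPB : ∀ v, v ≠ u0 → privateBorder G g v = privateBorder G f v := by
    intro v hv
    unfold privateBorder
    rw [hPN v hv, hgv v hv]
  have hirr : IsIrredundant G g := by
    constructor
    · intro v
      by_cases hv : v = u0
      · subst hv; rw [hgu0]; exact hecc
      · rw [hgv v hv]; exact hf.1.1 v
    · intro v hv
      by_cases hvu0 : v = u0
      · rw [hvu0]
        -- u1 is in the private border of u0
        have hu1heard : hears G g u1 = {u0} := by
          ext w
          rw [hg_hears]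
          constructor
          · rintro (hw | ⟨hw, _⟩)
            · rw [h] at hw; exact hw.elim
            · exact hw
          · rintro rfl
            exact Or.inr ⟨rfl, by omega⟩
        have hu1PN : u1 ∈ privateNbhd G g u0 := hu1heard
        unfold privateBorder
        rw [if_neg]
        · exact ⟨u1, hu1PN, by rw [hgu0]; exact hdist10⟩
        · rintro ⟨_, hPNeq⟩
          rw [hPNeq] at hu1PN
          exact hne (hu1PN.symm)
      · rw [hPB v hvu0]
        exact hf.1.2 v (by rw [hgv v hvu0] at hv; exact hv)
  have heq := hf.2 g hirr hle
  have : g u0 = f u0 := by rw [heq]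
  omega

end Aux

open Broadcast in
/-- For every n ≥ 3 and every maximal irredundant broadcast f on P_n,
H_f(x_2) ≠ ∅ and H_f(x_{n-1}) ≠ ∅. -/
theorem second_vertices_dominated_of_maximal_irredundant_pathGraph (n : ℕ) (hn : 3 ≤ n)
    (f : Fin n → ℕ) (hf : IsMaximalIrredundant (SimpleGraph.pathGraph n) f) :
    hears (SimpleGraph.pathGraph n) f ⟨1, by omega⟩ ≠ ∅ ∧
    hears (SimpleGraph.pathGraph n) f ⟨n - 2, by omega⟩ ≠ ∅ := by
  constructor
  · apply hears_second_vertex (SimpleGraph.pathGraph n) f ⟨0, by omega⟩ ⟨1, by omega⟩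
    · rw [SimpleGraph.pathGraph_adj]; left; simp
    · calc 1 = (SimpleGraph.pathGraph n).dist ⟨0, by omega⟩ ⟨1, by omega⟩ := by
            rw [pathGraph_dist]; simp
        _ ≤ _ := Finset.le_sup (Finset.mem_univ _)
    · intro v hv
      have hv0 : v.val ≠ 0 := fun h => hv (Fin.ext h)
      rw [pathGraph_dist, pathGraph_dist]
      simp only []
      omega
    · intro u hu
      rw [pathGraph_dist] at hu
      simp only [] at hu
      have := u.isLt
      rcases Nat.lt_or_ge u.val 2 with h2 | h2
      · interval_cases h : u.val
        · exact Or.inl (Fin.ext h)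
        · exact Or.inr (Fin.ext h)
      · omega
    · exact hf
  · apply hears_second_vertex (SimpleGraph.pathGraph n) f ⟨n - 1, by omega⟩ ⟨n - 2, by omega⟩
    · rw [SimpleGraph.pathGraph_adj]; right; simp; omega
    · calc 1 = (SimpleGraph.pathGraph n).dist ⟨n - 1, by omega⟩ ⟨n - 2, by omega⟩ := by
            rw [pathGraph_dist]; simp only [Fin.val_mk]; omega
        _ ≤ _ := Finset.le_sup (Finset.mem_univ _)
    · intro v hv
      have hv0 : v.val ≠ n - 1 := fun h => hv (Fin.ext h)
      have := v.isLt
      rw [pathGraph_dist, pathGraph_dist]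
      simp only []
      omega
    · intro u hu
      rw [pathGraph_dist] at hu
      simp only [] at hu
      have := u.isLt
      rcases Nat.lt_or_ge u.val (n - 2) with h2 | h2
      · omega
      · rcases Nat.eq_or_lt_of_le h2 with h3 | h3
        · exact Or.inr (Fin.ext h3.symm)
        · exact Or.inl (Fin.ext (show u.val = n - 1 by omega))
    · exact hf
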